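/- There exists a function β : G → U(1) such that the cohomologous cocycle ω'(g,h) := ω(g,h)·β(g·h)·β(g)⁻¹·β(h)⁻¹ takes values in the n-th roots of unity, i.e., ω'(g,h)ⁿ = 1 for all g, h ∈ G. (Consequently, every H²(G, U(1)) class realized by a finite-dimensional projective unitary representation lies in the image of H²(G, ℚ/ℤ) → H²(G, U(1)), as asserted in Section 9.4.3.) -/

import Mathlib

/-- the 2-cocycle `ω` of a finite-dimensional projective unitary
representation can be modified by a coboundary `β` so that it takes values in the
`n`-th roots of unity; hence every `H²(G, U(1))` class realized in dimension `n`
lies in the image of `H²(G, ℚ/ℤ) → H²(G, U(1))` (Section 9.4.3). -/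
theorem projective_cocycle_cohomologous_to_roots_of_unity
    {G : Type*} [Group G] (n : ℕ) (hn : 1 ≤ n)
    (ρ : G → Matrix.unitaryGroup (Fin n) ℂ)
    (ω : G → G → ℂ) (hω : ∀ g h : G, ‖ω g h‖ = 1)
    (hρ : ∀ g h : G,
      (ρ g : Matrix (Fin n) (Fin n) ℂ) * (ρ h : Matrix (Fin n) (Fin n) ℂ)
        = ω g h • (ρ (g * h) : Matrix (Fin n) (Fin n) ℂ)) :
    ∃ β : G → ℂ, (∀ g : G, ‖β g‖ = 1) ∧
      ∀ g h : G, (ω g h * β (g * h) * (β g)⁻¹ * (β h)⁻¹) ^ n = 1 := by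
  -- choose β g to be an n-th root of (det (ρ g))⁻¹
  have hroot : ∀ g : G, ∃ z : ℂ, z ^ n = (ρ g : Matrix (Fin n) (Fin n) ℂ).det :=
    fun g => IsAlgClosed.exists_pow_nat_eq _ (by omega)
  choose β hβ using hroot
  have hdet : ∀ g : G, ‖(ρ g : Matrix (Fin n) (Fin n) ℂ).det‖ = 1 := by
    intro g
    have h := Matrix.det_of_mem_unitary (ρ g).2
    rw [Unitary.mem_iff] at h
    have : (starRingEnd ℂ) (ρ g : Matrix (Fin n) (Fin n) ℂ).det *
        (ρ g : Matrix (Fin n) (Fin n) ℂ).det = 1 := h.1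
    have := congrArg (‖·‖) this
    simp at this ⊢
    nlinarith [norm_nonneg (ρ g : Matrix (Fin n) (Fin n) ℂ).det, this]
  have hβnorm : ∀ g : G, ‖β g‖ = 1 := by
    intro g
    have h1 : ‖β g‖ ^ n = 1 := by
      rw [← norm_pow, hβ g, hdet g]
    exact (pow_left_inj₀ (n := n) (norm_nonneg _) zero_le_one (by omega)).mp (by rw [h1, one_pow])
  refine ⟨β, hβnorm, fun g h => ?_⟩
  have hdet0 : ∀ g : G, (ρ g : Matrix (Fin n) (Fin n) ℂ).det ≠ 0 := by
    intro g hc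
    have := hdet g; rw [hc] at this; simp at this
  have hβ0 : ∀ g : G, β g ≠ 0 := by
    intro g hc
    have := hβnorm g; rw [hc] at this; simp at this
  -- take determinants in hρ
  have key := congrArg Matrix.det (hρ g h)
  rw [Matrix.det_mul, Matrix.det_smul, Fintype.card_fin] at key
  have hωn : ω g h ^ n =
      (ρ g : Matrix (Fin n) (Fin n) ℂ).det * (ρ h : Matrix (Fin n) (Fin n) ℂ).det
        * ((ρ (g*h) : Matrix (Fin n) (Fin n) ℂ).det)⁻¹ := by
    exact (eq_mul_inv_iff_mul_eq₀ (hdet0 _)).mpr key.symm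
  rw [mul_pow, mul_pow, mul_pow, hωn, inv_pow, inv_pow, hβ g, hβ h, hβ (g*h)]
  field_simp [hdet0]
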